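/- arXiv:2002.10129 — 2 statements merged into one kernel-verified Lean document; each statement's English description precedes it below -/
import Mathlib

section
/- Let n ≥ 1, let U be a proper nonempty open subset of Euclidean space ℝⁿ, and let s be a connected compact subset of U whose Lebesgue (volume) measure is zero. Then for every ε > 0 and every r > 0 there exists a connected open set R with s ⊆ R ⊆ U such that for every point p in the topological boundary of U one has μ(R ∩ B(p,r)) < ε · μ(U ∩ B(p,r)), where μ is Lebesgue measure and B(p,r) is the open ball of center p and radius r. -/
open MeasureTheory Filter Topology Metric

/-- Thickening of a connected set is preconnected. -/
lemma thickening_preconnected {X : Type*} [NormedAddCommGroup X] [NormedSpace ℝ X]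
    {s : Set X} (hs : IsConnected s) {δ : ℝ} (hδ : 0 < δ) :
    IsPreconnected (Metric.thickening δ s) := by
  obtain ⟨x₀, hx₀⟩ := hs.nonempty
  have key : IsPreconnected (⋃ x : s, (s ∪ Metric.ball (x : X) δ)) := by
    refine isPreconnected_iUnion ⟨x₀, ?_⟩ ?_
    · exact Set.mem_iInter.2 fun x => Or.inl hx₀
    · intro x
      exact IsPreconnected.union (x : X) x.2 (Metric.mem_ball_self hδ)
        hs.isPreconnected (convex_ball (x : X) δ).isPreconnected
  have heq : (⋃ x : s, (s ∪ Metric.ball (x : X) δ)) = Metric.thickening δ s := by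
    apply Set.Subset.antisymm
    · refine Set.iUnion_subset fun x => Set.union_subset ?_ ?_
      · exact Metric.self_subset_thickening hδ s
      · rw [Metric.thickening_eq_biUnion_ball]
        exact Set.subset_biUnion_of_mem (u := fun y => Metric.ball y δ) x.2
    · rw [Metric.thickening_eq_biUnion_ball]
      refine Set.iUnion₂_subset fun x hx => ?_
      exact Set.subset_iUnion_of_subset ⟨x, hx⟩ Set.subset_union_right
  rwa [heq] at key

/-- Let `n ≥ 1`, let `U` be a proper nonempty open subset of `ℝⁿ`, and let `s` be a
connected compact subset of `U` of Lebesgue measure zero. Then for every `ε > 0` and `r > 0`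
there is a connected open set `R` with `s ⊆ R ⊆ U` such that
`μ(R ∩ B(p,r)) < ε · μ(U ∩ B(p,r))` for every point `p` in the boundary of `U`. -/
theorem smallremoval {n : ℕ} (hn : 1 ≤ n)
    (U : Set (EuclideanSpace ℝ (Fin n))) (hUopen : IsOpen U) (hUne : U.Nonempty)
    (hUproper : U ≠ Set.univ)
    (s : Set (EuclideanSpace ℝ (Fin n))) (hscompact : IsCompact s) (hsconn : IsConnected s)
    (hsU : s ⊆ U) (hs0 : volume s = 0)
    (ε : ℝ) (hε : 0 < ε) (r : ℝ) (hr : 0 < r) :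
    ∃ R : Set (EuclideanSpace ℝ (Fin n)), IsOpen R ∧ IsConnected R ∧ s ⊆ R ∧ R ⊆ U ∧
      ∀ p ∈ frontier U,
        volume (R ∩ Metric.ball p r) < ENNReal.ofReal ε * volume (U ∩ Metric.ball p r) := by
  -- positive volume of `U ∩ ball p ρ` for `p` in the frontier
  have hposvol : ∀ p ∈ frontier U, ∀ ρ : ℝ, 0 < ρ → 0 < volume (U ∩ Metric.ball p ρ) := by
    intro p hp ρ hρ
    have hpc : p ∈ closure U := hp.1
    have hne : (Metric.ball p ρ ∩ U).Nonempty :=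
      _root_.mem_closure_iff.1 hpc _ Metric.isOpen_ball (Metric.mem_ball_self hρ)
    have : (U ∩ Metric.ball p ρ).Nonempty := by rwa [Set.inter_comm]
    exact (hUopen.inter Metric.isOpen_ball).measure_pos volume this
  -- compact boundary region
  set K : Set (EuclideanSpace ℝ (Fin n)) :=
    Metric.cthickening (r + 1) s ∩ frontier U with hK_def
  have hKcompact : IsCompact K := (hscompact.cthickening).inter_right isClosed_frontier
  -- finite cover of K by balls of radius r/2 centered in K
  obtain ⟨t, htK, htcov⟩ := hKcompact.elim_nhds_subcover (fun p => Metric.ball p (r / 2))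
    (fun p _ => Metric.ball_mem_nhds p (by linarith))
  -- the constant c
  set c : ENNReal := t.inf (fun p => volume (U ∩ Metric.ball p (r / 2))) with hc_def
  have hc_pos : 0 < c := by
    rw [hc_def, Finset.lt_inf_iff (by simp : (0 : ENNReal) < ⊤)]
    intro p hp
    exact hposvol p (htK p hp).2 _ (by linarith)
  have hε'_pos : 0 < ENNReal.ofReal ε * c :=
    ENNReal.mul_pos (ENNReal.ofReal_pos.2 hε).ne' hc_pos.ne'
  -- choose δ
  obtain ⟨δ₀, hδ₀pos, hδ₀U⟩ := hscompact.exists_thickening_subset_open hUopen hsU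
  have htend : Tendsto (fun δ => volume (Metric.cthickening δ s)) (𝓝 0) (𝓝 0) := by
    have := tendsto_measure_cthickening_of_isCompact (μ := volume) hscompact
    rwa [hs0] at this
  have hev := htend.eventually_lt_const hε'_pos
  rw [Metric.eventually_nhds_iff] at hev
  obtain ⟨η, hηpos, hη⟩ := hev
  set δ : ℝ := min (min δ₀ 1) (η / 2) with hδ_def
  have hδpos : 0 < δ := lt_min (lt_min hδ₀pos one_pos) (by linarith)
  have hδ1 : δ ≤ 1 := le_trans (min_le_left _ _) (min_le_right _ _)
  have hδδ₀ : δ ≤ δ₀ := le_trans (min_le_left _ _) (min_le_left _ _)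
  have hδη : dist δ 0 < η := by
    rw [Real.dist_eq, sub_zero, abs_of_pos hδpos]
    calc δ ≤ η / 2 := min_le_right _ _
    _ < η := by linarith
  have hsmall : volume (Metric.cthickening δ s) < ENNReal.ofReal ε * c := hη hδη
  -- define R
  refine ⟨Metric.thickening δ s, Metric.isOpen_thickening, ?_, ?_, ?_, ?_⟩
  · exact ⟨hsconn.nonempty.mono (Metric.self_subset_thickening hδpos s),
      thickening_preconnected hsconn hδpos⟩
  · exact Metric.self_subset_thickening hδpos s
  · exact (Metric.thickening_mono hδδ₀ s).trans hδ₀U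
  · intro p hp
    rcases Set.eq_empty_or_nonempty (Metric.thickening δ s ∩ Metric.ball p r) with he | hne
    · rw [he]
      simpa using ENNReal.mul_pos (ENNReal.ofReal_pos.2 hε).ne' (hposvol p hp r hr).ne'
    · obtain ⟨x, hxR, hxb⟩ := hne
      obtain ⟨z, hzs, hzd⟩ := Metric.mem_thickening_iff.1 hxR
      have hpK : p ∈ K := by
        refine ⟨Metric.thickening_subset_cthickening _ _ ?_, hp⟩
        rw [Metric.mem_thickening_iff]
        refine ⟨z, hzs, ?_⟩
        have h1 : dist p x < r := by
          have := Metric.mem_ball.1 hxb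
          rwa [dist_comm]
        calc dist p z ≤ dist p x + dist x z := dist_triangle _ _ _
          _ < r + δ := by linarith
          _ ≤ r + 1 := by linarith
      obtain ⟨q, hqt, hpq⟩ := Set.mem_iUnion₂.1 (htcov hpK)
      have hball : Metric.ball q (r / 2) ⊆ Metric.ball p r := by
        intro y hy
        rw [Metric.mem_ball] at hy hpq ⊢
        calc dist y p ≤ dist y q + dist q p := dist_triangle _ _ _
          _ < r / 2 + r / 2 := by rw [dist_comm q p]; linarith
          _ = r := by ring
      have hcle : c ≤ volume (U ∩ Metric.ball p r) :=
        le_trans (Finset.inf_le hqt)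
          (measure_mono (Set.inter_subset_inter_right _ hball))
      calc volume (Metric.thickening δ s ∩ Metric.ball p r)
          ≤ volume (Metric.cthickening δ s) :=
            measure_mono ((Set.inter_subset_left).trans
              (Metric.thickening_subset_cthickening _ _))
        _ < ENNReal.ofReal ε * c := hsmall
        _ ≤ ENNReal.ofReal ε * volume (U ∩ Metric.ball p r) := mul_le_mul_right hcle _
end

section
/- For every bounded Lebesgue-measurable subset A of the complex plane ℂ and every δ > 0, there exists a compact set F ⊆ A such that the complement ℂ∖F is connected and m(A∖F) < δ, where m is planar Lebesgue measure. -/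
open MeasureTheory Filter Topology

/-- Volume of a "rectangle" in `ℂ`. -/
lemma complex_rect_volume (s t : Set ℝ) (hs : MeasurableSet s) (ht : MeasurableSet t) :
    volume {z : ℂ | z.re ∈ s ∧ z.im ∈ t} = volume s * volume t := by
  have h : {z : ℂ | z.re ∈ s ∧ z.im ∈ t} = Complex.measurableEquivRealProd ⁻¹' (s ×ˢ t) := by
    ext z; simp [Set.mem_prod]
  rw [h, Complex.volume_preserving_equiv_real_prod.measure_preimage
    ((hs.prod ht).nullMeasurableSet)]
  rw [Measure.volume_eq_prod, Measure.prod_prod]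

/-- for every bounded Lebesgue-measurable subset `A` of `ℂ` and every `δ > 0`
there is a compact set `F ⊆ A` with connected complement such that `m(A \ F) < δ`. -/
theorem compactConnectedComplementApprox (A : Set ℂ) (hAb : Bornology.IsBounded A)
    (hAm : MeasurableSet A) (δ : ℝ) (hδ : 0 < δ) :
    ∃ F : Set ℂ, IsCompact F ∧ F ⊆ A ∧ IsConnected Fᶜ ∧
      volume (A \ F) < ENNReal.ofReal δ := by
  classical
  -- A has finite measure
  obtain ⟨R₀, hR₀⟩ := hAb.subset_closedBall 0
  set R : ℝ := max R₀ 0 with hRdef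
  have hR0 : 0 ≤ R := le_max_right _ _
  have hRA : A ⊆ Metric.closedBall 0 R :=
    hR₀.trans (Metric.closedBall_subset_closedBall (le_max_left _ _))
  have hfin : volume A ≠ ⊤ :=
    ((measure_mono hRA).trans_lt (measure_closedBall_lt_top)).ne
  -- compact K ⊆ A approximating A
  obtain ⟨K, hKA, hKco, hKd⟩ := hAm.exists_isCompact_diff_lt hfin
    (ε := ENNReal.ofReal (δ / 2)) (by simp [ENNReal.ofReal_eq_zero]; linarith)
  -- enumeration of the rationals
  obtain ⟨e, he⟩ := exists_surjective_nat ℚ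
  set q : ℕ → ℝ := fun n => ((e n : ℚ) : ℝ) with hq
  have hqdense : ∀ (x r : ℝ), 0 < r → ∃ n, |q n - x| < r := by
    intro x r hr
    obtain ⟨p, hp1, hp2⟩ := exists_rat_btwn (show x - r < x by linarith)
    obtain ⟨n, rfl⟩ := he p
    refine ⟨n, ?_⟩
    rw [hq, abs_sub_lt_iff]
    constructor <;> simp only [] <;> linarith
  -- widths of strips
  set ε : ℕ → ℝ := fun n => δ / (2 ^ n * 32 * (R + 1)) with hε
  have hεpos : ∀ n, 0 < ε n := by
    intro n; rw [hε]; positivity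
  -- vertical and horizontal strips
  set V : ℕ → Set ℂ := fun n => Complex.re ⁻¹' Metric.ball (q n) (ε n) with hV
  set H : ℕ → Set ℂ := fun n => Complex.im ⁻¹' Metric.ball (q n) (ε n) with hH
  set S : Set ℂ := (⋃ n, V n) ∪ (⋃ n, H n) with hS
  have hmemV : ∀ n (b : ℝ), (⟨q n, b⟩ : ℂ) ∈ V n := fun n b =>
    Metric.mem_ball_self (hεpos n)
  have hmemH : ∀ n (a : ℝ), (⟨a, q n⟩ : ℂ) ∈ H n := fun n a =>
    Metric.mem_ball_self (hεpos n)
  have hVopen : ∀ n, IsOpen (V n) := fun n =>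
    Metric.isOpen_ball.preimage Complex.continuous_re
  have hHopen : ∀ n, IsOpen (H n) := fun n =>
    Metric.isOpen_ball.preimage Complex.continuous_im
  have hSopen : IsOpen S :=
    ((isOpen_iUnion hVopen).union (isOpen_iUnion hHopen))
  have hVpre : ∀ n, IsPreconnected (V n) := by
    intro n
    have : Convex ℝ (⇑Complex.reLm ⁻¹' Metric.ball (q n) (ε n)) :=
      (convex_ball _ _).linear_preimage Complex.reLm
    exact this.isPreconnected
  have hHpre : ∀ n, IsPreconnected (H n) := by
    intro n
    have : Convex ℝ (⇑Complex.imLm ⁻¹' Metric.ball (q n) (ε n)) :=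
      (convex_ball _ _).linear_preimage Complex.imLm
    exact this.isPreconnected
  -- S is preconnected
  set z₀ : ℂ := ⟨q 0, q 0⟩ with hz₀
  have hz₀S : z₀ ∈ S := Or.inl (Set.mem_iUnion.mpr ⟨0, hmemV 0 (q 0)⟩)
  have hSpre : IsPreconnected S := by
    have hrw : S = ⋃ n, (V 0 ∪ (V n ∪ H n)) := by
      ext z
      simp only [hS, Set.mem_union, Set.mem_iUnion]
      constructor
      · rintro (⟨n, hn⟩ | ⟨n, hn⟩)
        · exact ⟨n, Or.inr (Or.inl hn)⟩
        · exact ⟨n, Or.inr (Or.inr hn)⟩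
      · rintro ⟨n, (h | h | h)⟩
        · exact Or.inl ⟨0, h⟩
        · exact Or.inl ⟨n, h⟩
        · exact Or.inr ⟨n, h⟩
    rw [hrw]
    apply isPreconnected_iUnion
    · exact ⟨z₀, Set.mem_iInter.mpr fun n => Or.inl (hmemV 0 (q 0))⟩
    · intro n
      have h1 : IsPreconnected (V n ∪ H n) :=
        IsPreconnected.union (⟨q n, q n⟩ : ℂ) (hmemV n (q n)) (hmemH n (q n))
          (hVpre n) (hHpre n)
      exact IsPreconnected.union (⟨q 0, q n⟩ : ℂ) (hmemV 0 (q n))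
        (Or.inr (hmemH n (q 0))) (hVpre 0) h1
  -- S is dense (in every ball)
  have hSdense : ∀ (y : ℂ) (r : ℝ), 0 < r → (Metric.ball y r ∩ S).Nonempty := by
    intro y r hr
    obtain ⟨n, hn⟩ := hqdense y.re r hr
    refine ⟨⟨q n, y.im⟩, ?_, Or.inl (Set.mem_iUnion.mpr ⟨n, hmemV n y.im⟩)⟩
    have him : (⟨q n, y.im⟩ : ℂ).im = y.im := rfl
    rw [Metric.mem_ball, Complex.dist_of_im_eq him, Real.dist_eq]
    exact hn
  -- measure bounds for strips
  have hKball : K ⊆ Metric.closedBall 0 R := hKA.trans hRA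
  have hbound : ∀ n, 4 * R * ε n ≤ δ / (2 ^ n * 8) := by
    intro n
    have h2 : (0:ℝ) < 2 ^ n := by positivity
    have hR1 : (0:ℝ) < R + 1 := by linarith
    have hεn : ε n = δ / (2 ^ n * 32 * (R + 1)) := rfl
    calc 4 * R * ε n ≤ 4 * (R + 1) * ε n := by
          have := (hεpos n).le
          nlinarith
      _ = δ / (2 ^ n * 8) := by
          rw [hεn]
          field_simp
          ring
  have hVvol : ∀ n, volume (K ∩ V n) ≤ ENNReal.ofReal (δ / (2 ^ n * 8)) := by
    intro n
    have hsub : K ∩ V n ⊆ {z : ℂ | z.re ∈ Metric.ball (q n) (ε n) ∧ z.im ∈ Set.Icc (-R) R} := by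
      rintro z ⟨hzK, hzV⟩
      refine ⟨hzV, ?_⟩
      have : ‖z‖ ≤ R := by
        simpa [Complex.dist_eq] using Metric.mem_closedBall.mp (hKball hzK)
      have him := (Complex.abs_im_le_norm z).trans this
      rw [abs_le] at him
      exact him
    calc volume (K ∩ V n) ≤ _ := measure_mono hsub
      _ = volume (Metric.ball (q n) (ε n)) * volume (Set.Icc (-R) R) :=
          complex_rect_volume _ _ measurableSet_ball measurableSet_Icc
      _ = ENNReal.ofReal (2 * ε n) * ENNReal.ofReal (R - (-R)) := by
          rw [Real.volume_ball, Real.volume_Icc]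
      _ = ENNReal.ofReal (2 * ε n * (R - (-R))) :=
          (ENNReal.ofReal_mul (by have := hεpos n; linarith)).symm
      _ ≤ ENNReal.ofReal (δ / (2 ^ n * 8)) := by
          apply ENNReal.ofReal_le_ofReal
          have := hbound n
          nlinarith [hεpos n]
  have hHvol : ∀ n, volume (K ∩ H n) ≤ ENNReal.ofReal (δ / (2 ^ n * 8)) := by
    intro n
    have hsub : K ∩ H n ⊆ {z : ℂ | z.re ∈ Set.Icc (-R) R ∧ z.im ∈ Metric.ball (q n) (ε n)} := by
      rintro z ⟨hzK, hzH⟩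
      refine ⟨?_, hzH⟩
      have : ‖z‖ ≤ R := by
        simpa [Complex.dist_eq] using Metric.mem_closedBall.mp (hKball hzK)
      have hre := (Complex.abs_re_le_norm z).trans this
      rw [abs_le] at hre
      exact hre
    calc volume (K ∩ H n) ≤ _ := measure_mono hsub
      _ = volume (Set.Icc (-R) R) * volume (Metric.ball (q n) (ε n)) :=
          complex_rect_volume _ _ measurableSet_Icc measurableSet_ball
      _ = ENNReal.ofReal (R - (-R)) * ENNReal.ofReal (2 * ε n) := by
          rw [Real.volume_ball, Real.volume_Icc]
      _ = ENNReal.ofReal ((R - (-R)) * (2 * ε n)) :=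
          (ENNReal.ofReal_mul (by linarith)).symm
      _ ≤ ENNReal.ofReal (δ / (2 ^ n * 8)) := by
          apply ENNReal.ofReal_le_ofReal
          have := hbound n
          nlinarith [hεpos n]
  -- the geometric sum
  have hsum : ∑' n : ℕ, ENNReal.ofReal (δ / (2 ^ n * 8)) = ENNReal.ofReal (δ / 4) := by
    have heq : ∀ n : ℕ, ENNReal.ofReal (δ / (2 ^ n * 8)) =
        ENNReal.ofReal (δ / 8) * (2 : ENNReal)⁻¹ ^ n := by
      intro n
      have h1 : ((2:ENNReal))⁻¹ ^ n = ENNReal.ofReal ((2:ℝ)⁻¹ ^ n) := by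
        rw [ENNReal.ofReal_pow (by norm_num : (0:ℝ) ≤ 2⁻¹)]
        congr 1
        rw [ENNReal.ofReal_inv_of_pos (by norm_num : (0:ℝ) < 2)]
        norm_num
      rw [h1, ← ENNReal.ofReal_mul (by positivity)]
      congr 1
      rw [inv_pow, mul_comm ((2:ℝ)^n) 8, ← div_div, div_eq_mul_inv (δ/8)]
    simp_rw [heq]
    rw [ENNReal.tsum_mul_left, ENNReal.tsum_geometric, ENNReal.one_sub_inv_two, inv_inv]
    rw [show (2 : ENNReal) = ENNReal.ofReal 2 by norm_num,
      ← ENNReal.ofReal_mul (by positivity)]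
    congr 1
    ring
  -- total measure of K ∩ S
  have hKS : volume (K ∩ S) ≤ ENNReal.ofReal (δ / 2) := by
    have hsub : K ∩ S ⊆ (⋃ n, K ∩ V n) ∪ ⋃ n, K ∩ H n := by
      rintro z ⟨hzK, (hz | hz)⟩
      · obtain ⟨n, hn⟩ := Set.mem_iUnion.mp hz
        exact Or.inl (Set.mem_iUnion.mpr ⟨n, hzK, hn⟩)
      · obtain ⟨n, hn⟩ := Set.mem_iUnion.mp hz
        exact Or.inr (Set.mem_iUnion.mpr ⟨n, hzK, hn⟩)
    calc volume (K ∩ S) ≤ volume ((⋃ n, K ∩ V n) ∪ ⋃ n, K ∩ H n) := measure_mono hsub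
      _ ≤ volume (⋃ n, K ∩ V n) + volume (⋃ n, K ∩ H n) := measure_union_le _ _
      _ ≤ (∑' n, volume (K ∩ V n)) + ∑' n, volume (K ∩ H n) :=
          add_le_add (measure_iUnion_le _) (measure_iUnion_le _)
      _ ≤ (∑' n : ℕ, ENNReal.ofReal (δ / (2 ^ n * 8))) +
          ∑' n : ℕ, ENNReal.ofReal (δ / (2 ^ n * 8)) :=
          add_le_add (ENNReal.tsum_le_tsum hVvol) (ENNReal.tsum_le_tsum hHvol)
      _ = ENNReal.ofReal (δ / 4) + ENNReal.ofReal (δ / 4) := by rw [hsum]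
      _ = ENNReal.ofReal (δ / 2) := by
          rw [← ENNReal.ofReal_add (by positivity) (by positivity)]
          congr 1
          ring
  -- define F
  refine ⟨K \ S, hKco.diff hSopen, Set.diff_subset.trans hKA, ?_, ?_⟩
  · -- complement is connected
    have hFclosed : IsClosed (K \ S) := hKco.isClosed.sdiff hSopen
    have hFco : IsOpen (K \ S)ᶜ := hFclosed.isOpen_compl
    have hSF : S ⊆ (K \ S)ᶜ := fun z hz hzF => hzF.2 hz
    refine ⟨⟨z₀, hSF hz₀S⟩, ?_⟩
    apply isPreconnected_of_forall z₀
    intro y hy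
    obtain ⟨r, hr, hball⟩ := Metric.isOpen_iff.mp hFco y hy
    refine ⟨Metric.ball y r ∪ S, Set.union_subset hball hSF, Or.inr hz₀S,
      Or.inl (Metric.mem_ball_self hr), ?_⟩
    exact IsPreconnected.union' (hSdense y r hr)
      (convex_ball y r).isPreconnected hSpre
  · -- measure estimate
    have hsub : A \ (K \ S) ⊆ (A \ K) ∪ (K ∩ S) := by
      rintro z ⟨hzA, hz⟩
      by_cases hzK : z ∈ K
      · right
        refine ⟨hzK, ?_⟩
        by_contra hzS
        exact hz ⟨hzK, hzS⟩
      · exact Or.inl ⟨hzA, hzK⟩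
    calc volume (A \ (K \ S)) ≤ volume ((A \ K) ∪ (K ∩ S)) := measure_mono hsub
      _ ≤ volume (A \ K) + volume (K ∩ S) := measure_union_le _ _
      _ ≤ volume (A \ K) + ENNReal.ofReal (δ / 2) := add_le_add_right hKS _
      _ < ENNReal.ofReal (δ / 2) + ENNReal.ofReal (δ / 2) :=
          ENNReal.add_lt_add_right (by simp) hKd
      _ = ENNReal.ofReal δ := by
          rw [← ENNReal.ofReal_add (by positivity) (by positivity)]
          congr 1
          ring
end
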